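/- The arithmetic distance d(A,B) = rank(A − B) restricted to the set of unitary complex n×n matrices is geodesic: if U₁, U₂ are unitary with rank(U₁ − U₂) = k ≥ 2, there exists a unitary matrix V with rank(U₁ − V) = 1 and rank(V − U₂) = k − 1. -/

import Mathlib

open Matrix FiniteDimensional

namespace Stmt3Aux

variable {n : ℕ}

lemma rank_def (A : Matrix (Fin n) (Fin n) ℂ) :
    A.rank = Module.finrank ℂ (LinearMap.range A.mulVecLin) := rfl

lemma vecMulVec_mulVec (v w u : Fin n → ℂ) :
    (vecMulVec v w) *ᵥ u = (w ⬝ᵥ u) • v := by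
  ext i
  simp [vecMulVec_apply, mulVec, dotProduct, Finset.mul_sum, mul_comm, mul_assoc, mul_left_comm]

lemma vecMulVec_mul_self (v : Fin n → ℂ) :
    vecMulVec v (star v) * vecMulVec v (star v) = (star v ⬝ᵥ v) • vecMulVec v (star v) := by
  ext i j
  simp only [vecMulVec_apply, Matrix.mul_apply, Matrix.smul_apply, dotProduct, smul_eq_mul,
    Finset.sum_mul, Finset.mul_sum, Pi.star_apply]
  exact Finset.sum_congr rfl fun x _ => by ring

lemma dot_self_ne_zero {v : Fin n → ℂ} (hv : v ≠ 0) : star v ⬝ᵥ v ≠ 0 := by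
  have h : star v ⬝ᵥ v = ((∑ i, Complex.normSq (v i) : ℝ) : ℂ) := by
    push_cast
    simp [dotProduct, Complex.normSq_eq_conj_mul_self]
  have hpos : 0 < ∑ i, Complex.normSq (v i) := by
    obtain ⟨i, hi⟩ := Function.ne_iff.mp hv
    exact Finset.sum_pos' (fun j _ => Complex.normSq_nonneg _)
      ⟨i, Finset.mem_univ i, Complex.normSq_pos.mpr hi⟩
  rw [h]; exact_mod_cast hpos.ne'

lemma star_dot_self (v : Fin n → ℂ) : star (star v ⬝ᵥ v) = star v ⬝ᵥ v := by
  simp [dotProduct, star_sum, mul_comm]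

/-- Core construction: for a unitary `W` with `rank (1 - W) = k ≥ 1` there is a unitary `X`
with `rank (1 - X) = 1` and `rank (X - W) = k - 1`. -/
lemma core (W : Matrix (Fin n) (Fin n) ℂ) (hW : W ∈ Matrix.unitaryGroup (Fin n) ℂ)
    (k : ℕ) (hk : (1 - W).rank = k) (h1 : 1 ≤ k) :
    ∃ X : Matrix (Fin n) (Fin n) ℂ, X ∈ Matrix.unitaryGroup (Fin n) ℂ ∧
      (1 - X).rank = 1 ∧ (X - W).rank = k - 1 := by
  have hWW : Wᴴ * W = 1 := by
    simpa [Matrix.star_eq_conjTranspose] using Matrix.mem_unitaryGroup_iff'.mp hW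
  -- the range of `1 - W`
  set R : Submodule ℂ (Fin n → ℂ) := LinearMap.range (1 - W).mulVecLin with hR
  have hRrank : Module.finrank ℂ R = k := hk
  have hkn : k ≤ n := by
    rw [← hk]
    simpa using (1 - W).rank_le_card_width
  -- `R` is invariant under `W`
  have hinv : ∀ x ∈ R, W.mulVecLin x ∈ R := by
    rintro x ⟨y, rfl⟩
    refine ⟨W *ᵥ y, ?_⟩
    simp only [mulVecLin_apply, mulVec_mulVec]
    rw [Matrix.sub_mul, Matrix.mul_sub]
    simp [Matrix.one_mul, Matrix.mul_one]
  -- an eigenvector of `W` inside `R`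
  haveI : Nontrivial R := Module.nontrivial_of_finrank_pos (R := ℂ) (by omega)
  obtain ⟨lam, hlam⟩ := Module.End.exists_eigenvalue ((W.mulVecLin).restrict hinv)
  obtain ⟨vv, hvv⟩ := hlam.exists_hasEigenvector
  set v : Fin n → ℂ := (vv : Fin n → ℂ) with hvdef
  have hv0 : v ≠ 0 := fun h => hvv.2 (Subtype.ext h)
  have hvR : v ∈ R := vv.2
  have hWv : W *ᵥ v = lam • v := by
    have := hvv.apply_eq_smul
    have h2 := congrArg (Subtype.val) this
    simpa [LinearMap.restrict_apply, hvdef] using h2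
  set c : ℂ := star v ⬝ᵥ v with hc
  have hcne : c ≠ 0 := dot_self_ne_zero hv0
  have hcstar : star c = c := star_dot_self v
  -- unit modulus of the eigenvalue
  have hdotW : ∀ x y : Fin n → ℂ, star (W *ᵥ x) ⬝ᵥ (W *ᵥ y) = star x ⬝ᵥ y := by
    intro x y
    have : star (W *ᵥ x) ⬝ᵥ (W *ᵥ y) = star x ⬝ᵥ ((Wᴴ * W) *ᵥ y) := by
      simp [star_mulVec, dotProduct_mulVec, vecMul_vecMul]
    simpa [hWW] using this
  have hlamunit : star lam * lam = 1 := by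
    have h := hdotW v v
    rw [hWv] at h
    have h' : star lam * lam * c = c := by
      have := h
      simp only [star_smul, smul_dotProduct, dotProduct_smul, smul_eq_mul, ← hc] at this
      linear_combination this
    have : (star lam * lam - 1) * c = 0 := by ring_nf; linear_combination h'
    rcases mul_eq_zero.mp this with h'' | h''
    · linear_combination h''
    · exact absurd h'' hcne
  have hlamne : lam ≠ 0 := by
    intro h; rw [h] at hlamunit; simp at hlamunit
  have hstarlam : star lam = lam⁻¹ := eq_inv_of_mul_eq_one_left hlamunit
  -- conjugate transpose acts by the inverse eigenvalue
  have hWHv : Wᴴ *ᵥ v = star lam • v := by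
    have h1 : Wᴴ *ᵥ (W *ᵥ v) = v := by
      rw [mulVec_mulVec, hWW, one_mulVec]
    rw [hWv, mulVec_smul] at h1
    rw [hstarlam]
    rw [eq_comm, inv_smul_eq_iff₀ hlamne]
    exact h1.symm
  -- the eigenvalue is not 1
  have hlamne1 : lam ≠ 1 := by
    intro h
    rw [h, one_smul] at hWv
    obtain ⟨y, hy⟩ := hvR
    have hWHv1 : (1 - W)ᴴ *ᵥ v = 0 := by
      have : Wᴴ *ᵥ v = v := by rw [hWHv, h]; simp
      simp [conjTranspose_sub, sub_mulVec, this]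
    have : c = 0 := by
      have hy' : (1 - W) *ᵥ y = v := by simpa [sub_mulVec] using hy
      calc c = star ((1 - W) *ᵥ y) ⬝ᵥ v := by rw [hy', hc]
        _ = star y ⬝ᵥ ((1 - W)ᴴ *ᵥ v) := by
            rw [star_mulVec, dotProduct_mulVec]
        _ = 0 := by rw [hWHv1, dotProduct_zero]
    exact hcne this
  -- eigenvectors for 1 are orthogonal to v
  have horth : ∀ u : Fin n → ℂ, W *ᵥ u = u → star v ⬝ᵥ u = 0 := by
    intro u hu
    have h1 : star v ⬝ᵥ u = lam * (star v ⬝ᵥ u) := by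
      calc star v ⬝ᵥ u = star v ⬝ᵥ (W *ᵥ u) := by rw [hu]
        _ = star (Wᴴ *ᵥ v) ⬝ᵥ u := by
            rw [star_mulVec, conjTranspose_conjTranspose, dotProduct_mulVec]
        _ = lam * (star v ⬝ᵥ u) := by
            rw [hWHv, star_smul, smul_dotProduct, smul_eq_mul, star_star]
    have : (lam - 1) * (star v ⬝ᵥ u) = 0 := by linear_combination -h1
    rcases mul_eq_zero.mp this with h' | h'
    · exact absurd (by linear_combination h') hlamne1
    · exact h'
  -- the construction
  set M : Matrix (Fin n) (Fin n) ℂ := vecMulVec v (star v) with hM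
  set mu : ℂ := lam - 1 with hmu
  have hmune : mu ≠ 0 := sub_ne_zero.mpr hlamne1
  set X : Matrix (Fin n) (Fin n) ℂ := 1 + (mu / c) • M with hX
  have hMH : Mᴴ = M := by
    ext i j; simp [hM, vecMulVec_apply, conjTranspose_apply, mul_comm]
  have hMM : M * M = c • M := vecMulVec_mul_self v
  have hMv : ∀ u : Fin n → ℂ, M *ᵥ u = (star v ⬝ᵥ u) • v := fun u => vecMulVec_mulVec v (star v) u
  have hXv : ∀ u : Fin n → ℂ, X *ᵥ u = u + ((mu / c) * (star v ⬝ᵥ u)) • v := by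
    intro u
    rw [hX, add_mulVec, one_mulVec, smul_mulVec, hMv, smul_smul]
  -- X is unitary
  have hXunit : X ∈ Matrix.unitaryGroup (Fin n) ℂ := by
    rw [Matrix.mem_unitaryGroup_iff']
    have hXH : star X = 1 + (star mu / c) • M := by
      rw [hX, star_add, star_one, star_smul, star_div₀, hcstar, Matrix.star_eq_conjTranspose, hMH]
    have hsm : star mu = star lam - 1 := by rw [hmu, star_sub, star_one]
    have hco : star mu / c + (mu / c + mu / c * (star mu / c * c)) = 0 := by
      have hlu : (starRingEnd ℂ) lam * lam = 1 := hlamunit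
      simp only [hsm, hmu, Complex.star_def]
      field_simp
      rw [map_sub, map_one]; linear_combination hlu
    rw [hXH, hX]
    simp only [Matrix.mul_add, Matrix.add_mul, Matrix.one_mul, Matrix.mul_one,
      smul_mul_assoc, mul_smul_comm, hMM, smul_add, smul_smul]
    rw [← add_smul, add_assoc, ← add_smul, hco, zero_smul, add_zero]
  -- rank (1 - X) = 1
  have hrank1X : (1 - X).rank = 1 := by
    have hrange : LinearMap.range (1 - X).mulVecLin = Submodule.span ℂ {v} := by
      apply le_antisymm
      · rintro x ⟨u, rfl⟩
        have : (1 - X) *ᵥ u = (-((mu / c) * (star v ⬝ᵥ u))) • v := by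
          rw [sub_mulVec, one_mulVec, hXv, sub_add_cancel_left, neg_smul]
        rw [mulVecLin_apply, this]
        exact Submodule.smul_mem _ _ (Submodule.mem_span_singleton_self v)
      · rw [Submodule.span_singleton_le_iff_mem]
        refine ⟨(-mu)⁻¹ • v, ?_⟩
        have : (1 - X) *ᵥ v = (-mu) • v := by
          rw [sub_mulVec, one_mulVec, hXv, ← hc, div_mul_cancel₀ _ hcne, sub_add_cancel_left,
            neg_smul]
        rw [LinearMap.map_smul, mulVecLin_apply, this, smul_smul,
          inv_mul_cancel₀ (neg_ne_zero.mpr hmune), one_smul]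
    rw [rank_def, hrange]
    exact finrank_span_singleton hv0
  -- rank (X - W) = k - 1 via its kernel
  have hdim : Module.finrank ℂ (Fin n → ℂ) = n := by simp
  set K : Submodule ℂ (Fin n → ℂ) := LinearMap.ker (1 - W).mulVecLin with hK
  have hKmem : ∀ x, x ∈ K ↔ W *ᵥ x = x := by
    intro x
    rw [hK, LinearMap.mem_ker, mulVecLin_apply, sub_mulVec, one_mulVec, sub_eq_zero]
    exact eq_comm
  have hKrank : Module.finrank ℂ K = n - k := by
    have h := LinearMap.finrank_range_add_finrank_ker (1 - W).mulVecLin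
    rw [hdim, ← hR, ← hK] at h
    omega
  have hvnotK : v ∉ K := by
    intro h
    rw [hKmem] at h
    exact hcne (hc ▸ horth v h)
  have hker : LinearMap.ker (X - W).mulVecLin = K ⊔ Submodule.span ℂ {v} := by
    apply le_antisymm
    · intro u hu
      rw [LinearMap.mem_ker, mulVecLin_apply, sub_mulVec, sub_eq_zero] at hu
      set a : ℂ := star v ⬝ᵥ u with ha
      set w : Fin n → ℂ := u - (a / c) • v with hw
      have hWw : W *ᵥ w = w := by
        rw [hw, mulVec_sub, mulVec_smul, hWv, ← hu, hXv u, ← ha, smul_smul]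
        rw [add_sub_assoc, ← sub_smul]
        have hcoe : mu / c * a - a / c * lam = -(a / c) := by
          rw [hmu]; field_simp; ring
        rw [hcoe, neg_smul, ← sub_eq_add_neg]
      have hwK : w ∈ K := (hKmem w).mpr hWw
      have hu' : u = w + (a / c) • v := by rw [hw]; abel
      rw [hu']
      exact Submodule.add_mem _ (Submodule.mem_sup_left hwK)
        (Submodule.mem_sup_right (Submodule.smul_mem _ _ (Submodule.mem_span_singleton_self v)))
    · rw [sup_le_iff]
      constructor
      · intro x hx
        have horthx := horth x ((hKmem x).mp hx)
        rw [LinearMap.mem_ker, mulVecLin_apply, sub_mulVec, sub_eq_zero, hXv, horthx,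
          (hKmem x).mp hx]
        simp
      · rw [Submodule.span_singleton_le_iff_mem, LinearMap.mem_ker, mulVecLin_apply, sub_mulVec,
          sub_eq_zero, hXv, ← hc, div_mul_cancel₀ _ hcne, hWv, hmu, sub_smul, one_smul]
        abel
  have hdisj : K ⊓ Submodule.span ℂ {v} = ⊥ := by
    rw [eq_bot_iff]
    intro x hx
    obtain ⟨hxK, hxs⟩ := Submodule.mem_inf.mp hx
    obtain ⟨b, rfl⟩ := Submodule.mem_span_singleton.mp hxs
    rcases eq_or_ne b 0 with hb | hb
    · simp [hb]
    · exfalso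
      apply hvnotK
      have hveq : v = b⁻¹ • (b • v) := by rw [smul_smul, inv_mul_cancel₀ hb, one_smul]
      rw [hveq]
      exact Submodule.smul_mem K _ hxK
  have hkerrank : Module.finrank ℂ (LinearMap.ker (X - W).mulVecLin) = n - k + 1 := by
    rw [hker]
    have h := Submodule.finrank_sup_add_finrank_inf_eq K (Submodule.span ℂ {v})
    rw [hdisj, finrank_bot, finrank_span_singleton hv0, hKrank] at h
    omega
  have hrankXW : (X - W).rank = k - 1 := by
    have h := LinearMap.finrank_range_add_finrank_ker (X - W).mulVecLin
    rw [hkerrank, hdim] at h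
    rw [rank_def]
    omega
  exact ⟨X, hXunit, hrank1X, hrankXW⟩

end Stmt3Aux

/-- Arithmetic distance is geodesic on unitary complex matrices. -/
theorem stmt_3 {n : ℕ} (U₁ U₂ : Matrix (Fin n) (Fin n) ℂ)
    (hU₁ : U₁ ∈ Matrix.unitaryGroup (Fin n) ℂ)
    (hU₂ : U₂ ∈ Matrix.unitaryGroup (Fin n) ℂ) (k : ℕ)
    (hk : (U₁ - U₂).rank = k) (h2 : 2 ≤ k) :
    ∃ V : Matrix (Fin n) (Fin n) ℂ, V ∈ Matrix.unitaryGroup (Fin n) ℂ ∧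
      (U₁ - V).rank = 1 ∧ (V - U₂).rank = k - 1 := by
  have hU₁star : U₁ * star U₁ = 1 := Matrix.mem_unitaryGroup_iff.mp hU₁
  have hU₁det : IsUnit U₁.det := by
    apply IsUnit.of_mul_eq_one (star U₁).det
    rw [← Matrix.det_mul, hU₁star, Matrix.det_one]
  set W : Matrix (Fin n) (Fin n) ℂ := star U₁ * U₂ with hWdef
  have hW : W ∈ Matrix.unitaryGroup (Fin n) ℂ := mul_mem (Unitary.star_mem hU₁) hU₂
  have hfactor : U₁ * (1 - W) = U₁ - U₂ := by
    rw [Matrix.mul_sub, Matrix.mul_one, hWdef, ← Matrix.mul_assoc, hU₁star, Matrix.one_mul]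
  have hkW : (1 - W).rank = k := by
    rw [← hk, ← hfactor, Matrix.rank_mul_eq_right_of_isUnit_det U₁ _ hU₁det]
  obtain ⟨X, hX, hX1, hX2⟩ := Stmt3Aux.core W hW k hkW (by omega)
  refine ⟨U₁ * X, mul_mem hU₁ hX, ?_, ?_⟩
  · have : U₁ - U₁ * X = U₁ * (1 - X) := by
      rw [Matrix.mul_sub, Matrix.mul_one]
    rw [this, Matrix.rank_mul_eq_right_of_isUnit_det U₁ _ hU₁det, hX1]
  · have : U₁ * X - U₂ = U₁ * (X - W) := by
      rw [Matrix.mul_sub, hWdef, ← Matrix.mul_assoc, hU₁star, Matrix.one_mul]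
    rw [this, Matrix.rank_mul_eq_right_of_isUnit_det U₁ _ hU₁det, hX2]
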